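/- Let H = (V_H, E_H) be an undirected multigraph, let N ⊆ E_H, let k ≥ 0 be an integer, let F_1, …, F_m be a maximal spanning forest decomposition (msfd) of order m ≥ k + 1 of H ∖ N, and let H' = (V_H, E') with E' = N ∪ F_1 ∪ … ∪ F_{k+1}. Then for every nonempty proper subset S ⊂ V_H, min(λ(S,H'), k+1) = min(λ(S,H), k+1); in particular, if λ(S,H) ≤ k+1 then λ(S,H') = λ(S,H), and if λ(S,H) > k+1 then λ(S,H') ≥ k+1. -/

import Mathlib

open scoped Classical in
/-- A multigraph on vertex set `V` is modeled by the multiset of its edges,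
each an unordered pair of distinct vertices. `mCut M S` is the size of the edge cut
`E_M(S, V∖S)`: the number of edges of `M` (with multiplicity) with one endpoint in `S`
and the other in `Sᶜ`. -/
noncomputable def mCut {V : Type*} (M : Multiset (Sym2 V)) (S : Set V) : ℕ :=
  Multiset.card (M.filter fun e => ∃ u ∈ S, ∃ v ∈ Sᶜ, e = s(u, v))

/-- The simple graph underlying a multiset of edges. -/
def graphOf {V : Type*} (M : Multiset (Sym2 V)) : SimpleGraph V :=
  SimpleGraph.fromEdgeSet {e | e ∈ M}

/-- A multiset of edges is a forest: no repeated edges, no self-loops, and the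
underlying simple graph is acyclic. -/
def IsMForest {V : Type*} (F : Multiset (Sym2 V)) : Prop :=
  F.Nodup ∧ (∀ e ∈ F, ¬e.IsDiag) ∧ (graphOf F).IsAcyclic

/-- `F` is a maximal spanning forest of the multigraph `R`: a subforest of `R` such that
the endpoints of every edge of `R` lie in the same component of `F`. -/
def IsMaxSpanningForest {V : Type*} (R F : Multiset (Sym2 V)) : Prop :=
  F ≤ R ∧ IsMForest F ∧ ∀ u v : V, s(u, v) ∈ R → (graphOf F).Reachable u v

open scoped Classical in
/-- `F 1, …, F m` is a maximal spanning forest decomposition of order `m` of the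
multigraph `M`: the forests decompose `M` (so they are edge-disjoint as sub-multisets
and their union is `M`) and each `F i` is a maximal spanning forest of
`M ∖ (F 1 ∪ … ∪ F (i-1))`. -/
noncomputable def IsMSFD {V : Type*} (M : Multiset (Sym2 V)) (m : ℕ)
    (F : ℕ → Multiset (Sym2 V)) : Prop :=
  (∑ i ∈ Finset.Icc 1 m, F i) = M ∧
  ∀ i ∈ Finset.Icc 1 m, IsMaxSpanningForest (M - ∑ j ∈ Finset.Icc 1 (i - 1), F j) (F i)

/-- The edge connectivity of the multigraph `M`: the minimum of `λ(S,M)` over all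
nonempty proper subsets `S ⊂ V`. -/
noncomputable def mEdgeConn {V : Type*} (M : Multiset (Sym2 V)) : ℕ :=
  sInf {c : ℕ | ∃ S : Set V, S.Nonempty ∧ Sᶜ.Nonempty ∧ mCut M S = c}


open scoped Classical in
lemma mCut_add {V : Type*} (A B : Multiset (Sym2 V)) (S : Set V) :
    mCut (A + B) S = mCut A S + mCut B S := by
  simp [mCut, Multiset.filter_add]

open scoped Classical in
lemma mCut_mono {V : Type*} {A B : Multiset (Sym2 V)} (h : A ≤ B) (S : Set V) :
    mCut A S ≤ mCut B S :=
  Multiset.card_le_card (Multiset.filter_le_filter _ h)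

open scoped Classical in
lemma mCut_sum {V ι : Type*} (s : Finset ι) (f : ι → Multiset (Sym2 V)) (S : Set V) :
    mCut (∑ i ∈ s, f i) S = ∑ i ∈ s, mCut (f i) S := by
  induction s using Finset.cons_induction with
  | empty => simp [mCut]
  | cons a s ha ih => rw [Finset.sum_cons, Finset.sum_cons, mCut_add, ih]

open scoped Classical in
lemma mCut_eq_zero_of_msf {V : Type*} {R F : Multiset (Sym2 V)} {S : Set V}
    (h : IsMaxSpanningForest R F) (h0 : mCut F S = 0) : mCut R S = 0 := by
  rw [mCut, Multiset.card_eq_zero, Multiset.filter_eq_nil] at h0 ⊢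
  rintro e he ⟨u, hu, v, hv, rfl⟩
  obtain ⟨p⟩ := h.2.2 u v he
  obtain ⟨d, _, hdS1, hdS2⟩ := p.exists_boundary_dart S hu hv
  have hadj := d.adj
  simp only [graphOf, SimpleGraph.fromEdgeSet_adj, Set.mem_setOf_eq] at hadj
  exact h0 _ hadj.1 ⟨d.fst, hdS1, d.snd, hdS2, rfl⟩

open scoped Classical in
/-- Let `H` be a multigraph, `N ⊆ E_H`, `k ≥ 0`, let `F 1, …, F m` be an msfd of order
`m ≥ k + 1` of `H ∖ N`, and let `H' = N ∪ F 1 ∪ … ∪ F (k+1)`. Then for every nonempty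
proper subset `S`, `min(λ(S,H'), k+1) = min(λ(S,H), k+1)`; in particular, if
`λ(S,H) ≤ k+1` then `λ(S,H') = λ(S,H)`, and if `λ(S,H) > k+1` then `λ(S,H') ≥ k+1`. -/
theorem msfd_cut_min_eq {V : Type*} [Fintype V] (H : Multiset (Sym2 V))
    (hH : ∀ e ∈ H, ¬e.IsDiag) (N : Multiset (Sym2 V)) (hN : N ≤ H)
    (k m : ℕ) (hm : k + 1 ≤ m) (F : ℕ → Multiset (Sym2 V))
    (hF : IsMSFD (H - N) m F) :
    ∀ S : Set V, S.Nonempty → Sᶜ.Nonempty →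
      min (mCut (N + ∑ i ∈ Finset.Icc 1 (k + 1), F i) S) (k + 1) = min (mCut H S) (k + 1) ∧
      (mCut H S ≤ k + 1 → mCut (N + ∑ i ∈ Finset.Icc 1 (k + 1), F i) S = mCut H S) ∧
      (k + 1 < mCut H S → k + 1 ≤ mCut (N + ∑ i ∈ Finset.Icc 1 (k + 1), F i) S) := by
  obtain ⟨hsum, hmax⟩ := hF
  intro S hS hSc
  have hHM : H = N + (H - N) := by rw [add_comm, tsub_add_cancel_of_le hN]
  have hcutH : mCut H S = mCut N S + ∑ i ∈ Finset.Icc 1 m, mCut (F i) S := by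
    conv_lhs => rw [hHM]
    rw [mCut_add, ← hsum, mCut_sum]
  have hcutH' : mCut (N + ∑ i ∈ Finset.Icc 1 (k + 1), F i) S
      = mCut N S + ∑ i ∈ Finset.Icc 1 (k + 1), mCut (F i) S := by
    rw [mCut_add, mCut_sum]
  by_cases hcase : ∀ i ∈ Finset.Icc 1 (k + 1), 1 ≤ mCut (F i) S
  · have h1 : k + 1 ≤ ∑ i ∈ Finset.Icc 1 (k + 1), mCut (F i) S := by
      calc k + 1 = (Finset.Icc 1 (k + 1)).card • 1 := by simp [Nat.card_Icc]
        _ ≤ _ := Finset.card_nsmul_le_sum _ _ _ hcase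
    have hle2 : ∑ i ∈ Finset.Icc 1 (k + 1), mCut (F i) S
        ≤ ∑ i ∈ Finset.Icc 1 m, mCut (F i) S :=
      Finset.sum_le_sum_of_subset (Finset.Icc_subset_Icc_right hm)
    refine ⟨?_, ?_, ?_⟩ <;> omega
  · push_neg at hcase
    obtain ⟨i, hi, hi0⟩ := hcase
    rw [Finset.mem_Icc] at hi
    have hi0' : mCut (F i) S = 0 := by omega
    have himem : i ∈ Finset.Icc 1 m := Finset.mem_Icc.mpr ⟨hi.1, hi.2.trans hm⟩
    have hR0 : mCut (H - N - ∑ j ∈ Finset.Icc 1 (i - 1), F j) S = 0 :=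
      mCut_eq_zero_of_msf (hmax i himem) hi0'
    have hsplit : (∑ j ∈ Finset.Icc 1 (i - 1), F j) + ∑ j ∈ Finset.Icc i m, F j = H - N := by
      rw [← hsum]
      have e1 : Finset.Icc 1 (i - 1) = Finset.Ioc 0 (i - 1) := Finset.Icc_add_one_left_eq_Ioc 0 (i - 1)
      have e2 : Finset.Icc i m = Finset.Ioc (i - 1) m := by
        rw [← Finset.Icc_add_one_left_eq_Ioc]
        congr 1
        omega
      have e3 : Finset.Icc 1 m = Finset.Ioc 0 m := Finset.Icc_add_one_left_eq_Ioc 0 m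
      rw [e1, e2, e3]
      exact Finset.sum_Ioc_consecutive _ (Nat.zero_le _) (by omega)
    have hMsub : H - N - ∑ j ∈ Finset.Icc 1 (i - 1), F j = ∑ j ∈ Finset.Icc i m, F j := by
      rw [← hsplit, add_tsub_cancel_left]
    have hzero : ∀ j ∈ Finset.Icc (k + 2) m, mCut (F j) S = 0 := by
      intro j hj
      rw [Finset.mem_Icc] at hj
      have hjmem : j ∈ Finset.Icc i m := Finset.mem_Icc.mpr ⟨by omega, hj.2⟩
      have hle : F j ≤ ∑ j ∈ Finset.Icc i m, F j :=
        Finset.single_le_sum (f := fun j => F j) (fun _ _ => zero_le) hjmem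
      have := mCut_mono hle S
      rw [← hMsub] at this
      omega
    have hsum2 : ∑ i ∈ Finset.Icc 1 m, mCut (F i) S
        = ∑ i ∈ Finset.Icc 1 (k + 1), mCut (F i) S := by
      have e1 : Finset.Icc 1 (k + 1) = Finset.Ioc 0 (k + 1) := Finset.Icc_add_one_left_eq_Ioc 0 (k + 1)
      have e2 : Finset.Icc (k + 2) m = Finset.Ioc (k + 1) m := Finset.Icc_add_one_left_eq_Ioc (k + 1) m
      have e3 : Finset.Icc 1 m = Finset.Ioc 0 m := Finset.Icc_add_one_left_eq_Ioc 0 m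
      have := Finset.sum_Ioc_consecutive (fun j => mCut (F j) S) (Nat.zero_le (k + 1)) hm
      rw [← e1, ← e2, ← e3] at this
      rw [← this, Finset.sum_eq_zero hzero, add_zero]
    refine ⟨?_, ?_, ?_⟩ <;> omega
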